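/- Let f : ℕ → ℝ with f(0) = 0 and f(w+1) = Σ_{j=k(w)}^{I} p_j·j + f(w)·Σ_{j<k(w)} p_j, where k(w) is the least integer price strictly exceeding f(w), and p_j > 0 sum to 1 with I ≥ 2. Then the mean price μ = Σ_j p_j·j satisfies f(w) ≥ μ for all w ≥ 1. -/

import Mathlib

open Finset

/-- With the myopic-optimal cutoff `k(w)` = least integer price strictly exceeding `f(w)`,
the hold value with window at least one day is at least the unconditional mean price:
`f(w) ≥ μ = Σ_{j=1}^I p_j·j` for all `w ≥ 1`. -/
theorem stmt_11 (I : ℕ) (hI : 2 ≤ I) (p : ℕ → ℝ) (hp : ∀ j ∈ Icc 1 I, 0 < p j)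
    (hsum : ∑ j ∈ Icc 1 I, p j = 1)
    (f : ℕ → ℝ) (hf0 : f 0 = 0) (k : ℕ → ℕ)
    (hk : ∀ w, IsLeast {i : ℕ | 1 ≤ i ∧ i ≤ I ∧ f w < (i : ℝ)} (k w))
    (hfrec : ∀ w, f (w + 1) =
      ∑ j ∈ Icc (k w) I, p j * j + f w * ∑ j ∈ Icc 1 (k w - 1), p j) :
    ∀ w, 1 ≤ w → ∑ j ∈ Icc 1 I, p j * j ≤ f w := by
  have key : ∀ w, ∑ j ∈ Icc 1 I, p j * j ≤ f (w + 1) := by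
    intro w
    obtain ⟨⟨hk1, hkI, hfk⟩, hmin⟩ := hk w
    have hfw : ∀ j ∈ Icc 1 (k w - 1), (j : ℝ) ≤ f w := by
      intro j hj
      simp only [mem_Icc] at hj
      by_contra h
      push_neg at h
      have := hmin ⟨hj.1, by omega, h⟩
      omega
    have hkk : k w = (k w - 1) + 1 := by omega
    have hsplit : ∑ j ∈ Icc 1 I, p j * j
        = ∑ j ∈ Icc 1 (k w - 1), p j * j + ∑ j ∈ Icc (k w) I, p j * j := by
      have h1 : Icc 1 I = Ioc 0 I := by rw [← Finset.Icc_add_one_left_eq_Ioc]; rfl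
      have h2 : Icc 1 (k w - 1) = Ioc 0 (k w - 1) := by rw [← Finset.Icc_add_one_left_eq_Ioc]; rfl
      have h3 : Icc (k w) I = Ioc (k w - 1) I := by
        rw [hkk, Finset.Icc_add_one_left_eq_Ioc]; congr 1
      rw [h1, h2, h3, Finset.sum_Ioc_consecutive]
      · omega
      · omega
    have hle : ∑ j ∈ Icc 1 (k w - 1), p j * j ≤ f w * ∑ j ∈ Icc 1 (k w - 1), p j := by
      rw [Finset.mul_sum]
      apply Finset.sum_le_sum
      intro j hj
      have hjI : j ∈ Icc 1 I := by
        simp only [mem_Icc] at hj ⊢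
        omega
      have := (hp j hjI).le
      have := hfw j hj
      nlinarith
    rw [hfrec w, hsplit]
    linarith
  intro w hw
  obtain ⟨v, rfl⟩ : ∃ v, w = v + 1 := ⟨w - 1, by omega⟩
  exact key v
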